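/- Let d ≥ 2 be an integer, ρ > 1, η ≥ 1, λ ≥ 0, t > 0, b : ℕ → ℝ, and y : ℕ → ([0,t] → ℝ) a family of bounded measurable functions. Define g^η(x) = (η/d)·(1 − x/η)^d − η/d + x. Suppose T¹ and T² are two families of measurable functions ℕ → ([0,t] → [−η−1, η+1]) each satisfying: T_0 ≡ 0 and, for all i ≥ 1 and s ∈ [0,t], T_i(s) = b_i + y_i(s) − λd·∫_0^s (T_i(u) − T_{i-1}(u) − g^η(T_i(u)) + g^η(T_{i-1}(u))) du + ∫_0^s (T_{i+1}(u) − T_i(u)) du. Then T¹ = T². -/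

import Mathlib

open MeasureTheory intervalIntegral Filter

lemma pow_lip (a b : ℝ) (ha : |a| ≤ 3) (hb : |b| ≤ 3) :
    ∀ n : ℕ, |a ^ n - b ^ n| ≤ n * 3 ^ n * |a - b| := by
  intro n
  induction n with
  | zero => simp
  | succ n ih =>
    have h : a ^ (n+1) - b ^ (n+1) = a * (a ^ n - b ^ n) + b ^ n * (a - b) := by ring
    have hbn : |b ^ n| ≤ 3 ^ n := by
      rw [abs_pow]; exact pow_le_pow_left₀ (abs_nonneg b) hb n
    calc |a ^ (n+1) - b ^ (n+1)| ≤ |a| * |a ^ n - b ^ n| + |b ^ n| * |a - b| := by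
          rw [h]; exact (abs_add_le _ _).trans (by rw [abs_mul, abs_mul])
      _ ≤ 3 * (n * 3 ^ n * |a - b|) + 3 ^ n * |a - b| := by gcongr
      _ ≤ (n+1 : ℕ) * 3 ^ (n+1) * |a - b| := by
          push_cast
          rw [pow_succ]
          nlinarith [mul_nonneg (pow_nonneg (by norm_num : (0:ℝ) ≤ 3) n) (abs_nonneg (a-b))]

/-- The nonlinear correction term `g^η(x) = (η/d)(1 − x/η)^d − η/d + x`. -/
noncomputable def gEta (d : ℕ) (η : ℝ) (x : ℝ) : ℝ :=
  η / d * (1 - x / η) ^ d - η / d + x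

lemma gEta_lip (d : ℕ) (hd : 2 ≤ d) (η : ℝ) (hη : 1 ≤ η) (x y : ℝ)
    (hx : x ∈ Set.Icc (-η - 1) (η + 1)) (hy : y ∈ Set.Icc (-η - 1) (η + 1)) :
    |gEta d η x - gEta d η y| ≤ ((3:ℝ) ^ d + 1) * |x - y| := by
  have hη0 : (0:ℝ) < η := lt_of_lt_of_le one_pos hη
  have hd0 : (0:ℝ) < d := by positivity
  have habs : ∀ z : ℝ, z ∈ Set.Icc (-η - 1) (η + 1) → |1 - z / η| ≤ 3 := by
    intro z hz
    have h1 : z / η ≤ 2 := by rw [div_le_iff₀ hη0]; nlinarith [hz.2]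
    have h2 : -2 ≤ z / η := by rw [neg_le, ← neg_div, div_le_iff₀ hη0]; nlinarith [hz.1]
    rw [abs_le]; constructor <;> linarith
  have key : gEta d η x - gEta d η y
      = η/d * ((1-x/η)^d - (1-y/η)^d) + (x - y) := by unfold gEta; ring
  have h1 := pow_lip (1-x/η) (1-y/η) (habs x hx) (habs y hy) d
  have hab : |(1-x/η) - (1-y/η)| = |x-y| / η := by
    rw [show (1-x/η)-(1-y/η) = (y-x)/η by ring, abs_div, abs_of_pos hη0, abs_sub_comm]
  rw [hab] at h1
  calc |gEta d η x - gEta d η y|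
      ≤ |η/d * ((1-x/η)^d - (1-y/η)^d)| + |x - y| := by rw [key]; exact abs_add_le _ _
    _ = η/d * |(1-x/η)^d - (1-y/η)^d| + |x - y| := by
        rw [abs_mul, abs_of_pos (div_pos hη0 hd0)]
    _ ≤ η/d * (d * 3^d * (|x-y|/η)) + |x - y| := by gcongr
    _ = ((3:ℝ)^d + 1) * |x - y| := by field_simp

lemma abs_four (a b c e : ℝ) : |a - b - c + e| ≤ |a| + |b| + |c| + |e| := by
  have h1 := abs_add_le (a - b - c) e
  have h2 := abs_add_le (a - b) (-c)
  have h3 := abs_add_le a (-b)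
  rw [abs_neg] at h2 h3
  rw [sub_eq_add_neg (a-b) c] at h1
  rw [sub_eq_add_neg a b] at h2
  calc |a - b - c + e| ≤ |a - b - c| + |e| := h1
    _ = |a + -b + -c| + |e| := by ring_nf
    _ ≤ (|a| + |b| + |c|) + |e| := by
        have := abs_add_le (a + -b) (-c); rw [abs_neg] at this
        have h3' := abs_add_le a (-b); rw [abs_neg] at h3'
        linarith
    _ = |a| + |b| + |c| + |e| := by ring

set_option maxHeartbeats 1000000 in
theorem integral_system_uniqueness (d : ℕ) (hd : 2 ≤ d) (ρ η lam t : ℝ)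
    (hρ : 1 < ρ) (hη : 1 ≤ η) (hlam : 0 ≤ lam) (ht : 0 < t)
    (b : ℕ → ℝ) (y : ℕ → ℝ → ℝ)
    (hymeas : ∀ i : ℕ, Measurable (y i))
    (hybdd : ∀ i : ℕ, ∃ C : ℝ, ∀ s ∈ Set.Icc (0 : ℝ) t, |y i s| ≤ C)
    (T₁ T₂ : ℕ → ℝ → ℝ)
    (hmeas₁ : ∀ i : ℕ, Measurable (T₁ i)) (hmeas₂ : ∀ i : ℕ, Measurable (T₂ i))
    (hbdd₁ : ∀ i : ℕ, ∀ s ∈ Set.Icc (0 : ℝ) t, T₁ i s ∈ Set.Icc (-η - 1) (η + 1))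
    (hbdd₂ : ∀ i : ℕ, ∀ s ∈ Set.Icc (0 : ℝ) t, T₂ i s ∈ Set.Icc (-η - 1) (η + 1))
    (h0₁ : ∀ s ∈ Set.Icc (0 : ℝ) t, T₁ 0 s = 0)
    (h0₂ : ∀ s ∈ Set.Icc (0 : ℝ) t, T₂ 0 s = 0)
    (heq₁ : ∀ i : ℕ, ∀ s ∈ Set.Icc (0 : ℝ) t,
      T₁ (i + 1) s = b (i + 1) + y (i + 1) s
        - lam * d * ∫ u in (0 : ℝ)..s,
            (T₁ (i + 1) u - T₁ i u - gEta d η (T₁ (i + 1) u) + gEta d η (T₁ i u))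
        + ∫ u in (0 : ℝ)..s, (T₁ (i + 2) u - T₁ (i + 1) u))
    (heq₂ : ∀ i : ℕ, ∀ s ∈ Set.Icc (0 : ℝ) t,
      T₂ (i + 1) s = b (i + 1) + y (i + 1) s
        - lam * d * ∫ u in (0 : ℝ)..s,
            (T₂ (i + 1) u - T₂ i u - gEta d η (T₂ (i + 1) u) + gEta d η (T₂ i u))
        + ∫ u in (0 : ℝ)..s, (T₂ (i + 2) u - T₂ (i + 1) u)) :
    ∀ i : ℕ, Set.EqOn (T₁ i) (T₂ i) (Set.Icc 0 t) := by
  have hη0 : (0:ℝ) < η := lt_of_lt_of_le one_pos hη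
  set L : ℝ := (3:ℝ)^d + 1 with hLdef
  have hL0 : (0:ℝ) ≤ L := by positivity
  set B : ℝ := 2*(η+1) with hBdef
  have hB0 : (0:ℝ) ≤ B := by rw [hBdef]; linarith
  set K : ℝ := lam * d * (2 + 2*L + 2*t) with hKdef
  have hK0 : (0:ℝ) ≤ K := by
    rw [hKdef]
    exact mul_nonneg (by positivity) (by linarith)
  -- Lipschitz bound
  have hg : ∀ x z : ℝ, x ∈ Set.Icc (-η-1) (η+1) → z ∈ Set.Icc (-η-1) (η+1) →
      |gEta d η x - gEta d η z| ≤ L * |x - z| := fun x z hx hz => gEta_lip d hd η hη x z hx hz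
  have h0mem : (0:ℝ) ∈ Set.Icc (-η-1) (η+1) := ⟨by linarith, by linarith⟩
  have hgz : gEta d η 0 = 0 := by unfold gEta; simp
  have habs_of_mem : ∀ x : ℝ, x ∈ Set.Icc (-η-1) (η+1) → |x| ≤ η + 1 := by
    intro x hx; rw [abs_le]; exact ⟨by linarith [hx.1], hx.2⟩
  have hgbd : ∀ x : ℝ, x ∈ Set.Icc (-η-1) (η+1) → |gEta d η x| ≤ L * (η+1) := by
    intro x hx
    have := hg x 0 hx h0mem
    rw [hgz, sub_zero, sub_zero] at this
    exact this.trans (by have := habs_of_mem x hx; nlinarith)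
  have hgc : Continuous (gEta d η) := by unfold gEta; fun_prop
  -- integrability helper
  have hii : ∀ (f : ℝ → ℝ) (C : ℝ), Measurable f → (∀ u ∈ Set.Icc (0:ℝ) t, |f u| ≤ C) →
      ∀ s ∈ Set.Icc (0:ℝ) t, IntervalIntegrable f volume 0 s := by
    intro f C hfm hfb s hs
    rw [intervalIntegrable_iff, Set.uIoc_of_le hs.1]
    apply Integrable.mono' (integrable_const C) hfm.aestronglyMeasurable
    filter_upwards [ae_restrict_mem measurableSet_Ioc] with u hu
    exact hfb u ⟨le_of_lt hu.1, hu.2.trans hs.2⟩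
  -- integrability of the integrands
  have hFmeas : ∀ (T : ℕ → ℝ → ℝ), (∀ i, Measurable (T i)) → ∀ j : ℕ,
      Measurable (fun u => T (j+1) u - T j u - gEta d η (T (j+1) u) + gEta d η (T j u)) := by
    intro T hTm j
    exact (((hTm (j+1)).sub (hTm j)).sub (hgc.measurable.comp (hTm (j+1)))).add
      (hgc.measurable.comp (hTm j))
  have hFbd : ∀ (T : ℕ → ℝ → ℝ),
      (∀ i, ∀ s ∈ Set.Icc (0:ℝ) t, T i s ∈ Set.Icc (-η-1) (η+1)) → ∀ j : ℕ,
      ∀ u ∈ Set.Icc (0:ℝ) t,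
      |T (j+1) u - T j u - gEta d η (T (j+1) u) + gEta d η (T j u)|
        ≤ 2*(η+1) + 2*(L*(η+1)) := by
    intro T hTb j u hu
    have h1 := habs_of_mem _ (hTb (j+1) u hu)
    have h2 := habs_of_mem _ (hTb j u hu)
    have h3 := hgbd _ (hTb (j+1) u hu)
    have h4 := hgbd _ (hTb j u hu)
    calc |T (j+1) u - T j u - gEta d η (T (j+1) u) + gEta d η (T j u)|
        ≤ |T (j+1) u| + |T j u| + |gEta d η (T (j+1) u)| + |gEta d η (T j u)| :=
          abs_four _ _ _ _
      _ ≤ 2*(η+1) + 2*(L*(η+1)) := by linarith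
  have hGmeas : ∀ (T : ℕ → ℝ → ℝ), (∀ i, Measurable (T i)) → ∀ j : ℕ,
      Measurable (fun u => T (j+2) u - T (j+1) u) := by
    intro T hTm j; exact (hTm (j+2)).sub (hTm (j+1))
  have hGbd : ∀ (T : ℕ → ℝ → ℝ),
      (∀ i, ∀ s ∈ Set.Icc (0:ℝ) t, T i s ∈ Set.Icc (-η-1) (η+1)) → ∀ j : ℕ,
      ∀ u ∈ Set.Icc (0:ℝ) t, |T (j+2) u - T (j+1) u| ≤ 2*(η+1) := by
    intro T hTb j u hu
    have h1 := habs_of_mem _ (hTb (j+2) u hu)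
    have h2 := habs_of_mem _ (hTb (j+1) u hu)
    calc |T (j+2) u - T (j+1) u| ≤ |T (j+2) u| + |T (j+1) u| := abs_sub _ _
      _ ≤ 2*(η+1) := by linarith
  -- main induction
  have key : ∀ (n : ℕ) (i : ℕ), ∀ s ∈ Set.Icc (0:ℝ) t,
      |T₁ i s - T₂ i s| ≤ B * K^n * s^n / n.factorial := by
    intro n
    induction n with
    | zero =>
      intro i s hs
      simp only [pow_zero, mul_one, Nat.factorial_zero, Nat.cast_one, div_one]
      have h1 := habs_of_mem _ (hbdd₁ i s hs)
      have h2 := habs_of_mem _ (hbdd₂ i s hs)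
      calc |T₁ i s - T₂ i s| ≤ |T₁ i s| + |T₂ i s| := abs_sub _ _
        _ ≤ B := by rw [hBdef]; linarith
    | succ n ih =>
      intro i s hs
      have hRHS0 : 0 ≤ B * K^(n+1) * s^(n+1) / (n+1).factorial :=
        div_nonneg (mul_nonneg (mul_nonneg hB0 (pow_nonneg hK0 _))
          (pow_nonneg hs.1 _)) (Nat.cast_nonneg _)
      match i with
      | 0 =>
        rw [h0₁ s hs, h0₂ s hs, sub_zero, abs_zero]
        exact hRHS0
      | (j+1) =>
        -- interval integrability of the basic integrands on [0,s]
        have hF1 : IntervalIntegrable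
            (fun u => T₁ (j+1) u - T₁ j u - gEta d η (T₁ (j+1) u) + gEta d η (T₁ j u))
            volume 0 s :=
          hii _ _ (hFmeas T₁ hmeas₁ j) (hFbd T₁ hbdd₁ j) s hs
        have hF2 : IntervalIntegrable
            (fun u => T₂ (j+1) u - T₂ j u - gEta d η (T₂ (j+1) u) + gEta d η (T₂ j u))
            volume 0 s :=
          hii _ _ (hFmeas T₂ hmeas₂ j) (hFbd T₂ hbdd₂ j) s hs
        have hG1 : IntervalIntegrable (fun u => T₁ (j+2) u - T₁ (j+1) u) volume 0 s :=
          hii _ _ (hGmeas T₁ hmeas₁ j) (hGbd T₁ hbdd₁ j) s hs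
        have hG2 : IntervalIntegrable (fun u => T₂ (j+2) u - T₂ (j+1) u) volume 0 s :=
          hii _ _ (hGmeas T₂ hmeas₂ j) (hGbd T₂ hbdd₂ j) s hs
        have hH1 : IntervalIntegrable
            (fun u => (T₁ (j+1) u - T₁ j u - gEta d η (T₁ (j+1) u) + gEta d η (T₁ j u))
              + ∫ w in (0:ℝ)..s, (T₁ (j+2) w - T₁ (j+1) w)) volume 0 s :=
          hF1.add intervalIntegrable_const
        have hH2 : IntervalIntegrable
            (fun u => (T₂ (j+1) u - T₂ j u - gEta d η (T₂ (j+1) u) + gEta d η (T₂ j u))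
              + ∫ w in (0:ℝ)..s, (T₂ (j+2) w - T₂ (j+1) w)) volume 0 s :=
          hF2.add intervalIntegrable_const
        have eH : (∫ u in (0:ℝ)..s,
              (((T₁ (j+1) u - T₁ j u - gEta d η (T₁ (j+1) u) + gEta d η (T₁ j u))
                  + ∫ w in (0:ℝ)..s, (T₁ (j+2) w - T₁ (j+1) w))
                - ((T₂ (j+1) u - T₂ j u - gEta d η (T₂ (j+1) u) + gEta d η (T₂ j u))
                  + ∫ w in (0:ℝ)..s, (T₂ (j+2) w - T₂ (j+1) w))))
            = (∫ u in (0:ℝ)..s,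
              ((T₁ (j+1) u - T₁ j u - gEta d η (T₁ (j+1) u) + gEta d η (T₁ j u))
                + ∫ w in (0:ℝ)..s, (T₁ (j+2) w - T₁ (j+1) w)))
              - ∫ u in (0:ℝ)..s,
              ((T₂ (j+1) u - T₂ j u - gEta d η (T₂ (j+1) u) + gEta d η (T₂ j u))
                + ∫ w in (0:ℝ)..s, (T₂ (j+2) w - T₂ (j+1) w)) :=
          intervalIntegral.integral_sub hH1 hH2
        have eG : (∫ u in (0:ℝ)..s,
              ((T₁ (j+2) u - T₁ (j+1) u) - (T₂ (j+2) u - T₂ (j+1) u)))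
            = (∫ u in (0:ℝ)..s, (T₁ (j+2) u - T₁ (j+1) u))
              - ∫ u in (0:ℝ)..s, (T₂ (j+2) u - T₂ (j+1) u) :=
          intervalIntegral.integral_sub hG1 hG2
        -- the difference equation (note: the second integral sits inside the first integrand)
        have hdiff : T₁ (j+1) s - T₂ (j+1) s
            = -(lam * d) * ∫ u in (0:ℝ)..s,
                (((T₁ (j+1) u - T₁ j u - gEta d η (T₁ (j+1) u) + gEta d η (T₁ j u))
                    + ∫ w in (0:ℝ)..s, (T₁ (j+2) w - T₁ (j+1) w))
                  - ((T₂ (j+1) u - T₂ j u - gEta d η (T₂ (j+1) u) + gEta d η (T₂ j u))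
                    + ∫ w in (0:ℝ)..s, (T₂ (j+2) w - T₂ (j+1) w))) := by
          rw [eH, heq₁ j s hs, heq₂ j s hs]
          ring
        -- pointwise bounds
        set c : ℝ := B * K^n / n.factorial with hcdef
        have hc0 : 0 ≤ c := div_nonneg (mul_nonneg hB0 (pow_nonneg hK0 _)) (Nat.cast_nonneg _)
        have hmemIcc : ∀ u, u ∈ Set.Ioc (0:ℝ) s → u ∈ Set.Icc (0:ℝ) t :=
          fun u hu => ⟨le_of_lt hu.1, hu.2.trans hs.2⟩
        have hcu : ∀ u : ℝ, B * K^n * u^n / n.factorial = c * u^n := by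
          intro u; rw [hcdef]; ring
        have hn1pos : (0:ℝ) < (n:ℝ) + 1 := by positivity
        have hFpt : ∀ u ∈ Set.Ioc (0:ℝ) s,
            |(T₁ (j+1) u - T₁ j u - gEta d η (T₁ (j+1) u) + gEta d η (T₁ j u))
              - (T₂ (j+1) u - T₂ j u - gEta d η (T₂ (j+1) u) + gEta d η (T₂ j u))|
              ≤ (2 + 2*L) * c * u^n := by
          intro u hu
          have hut := hmemIcc u hu
          have ih1 := ih (j+1) u hut
          have ih0 := ih j u hut
          rw [hcu u] at ih1 ih0
          have hg1 := hg _ _ (hbdd₁ (j+1) u hut) (hbdd₂ (j+1) u hut)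
          have hg0 := hg _ _ (hbdd₁ j u hut) (hbdd₂ j u hut)
          have hg1' : |gEta d η (T₁ (j+1) u) - gEta d η (T₂ (j+1) u)| ≤ L * (c * u^n) :=
            hg1.trans (mul_le_mul_of_nonneg_left ih1 hL0)
          have hg0' : |gEta d η (T₁ j u) - gEta d η (T₂ j u)| ≤ L * (c * u^n) :=
            hg0.trans (mul_le_mul_of_nonneg_left ih0 hL0)
          have hre : (T₁ (j+1) u - T₁ j u - gEta d η (T₁ (j+1) u) + gEta d η (T₁ j u))
              - (T₂ (j+1) u - T₂ j u - gEta d η (T₂ (j+1) u) + gEta d η (T₂ j u))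
              = (T₁ (j+1) u - T₂ (j+1) u) - (T₁ j u - T₂ j u)
                - (gEta d η (T₁ (j+1) u) - gEta d η (T₂ (j+1) u))
                + (gEta d η (T₁ j u) - gEta d η (T₂ j u)) := by ring
          rw [hre]
          calc _ ≤ |T₁ (j+1) u - T₂ (j+1) u| + |T₁ j u - T₂ j u|
                + |gEta d η (T₁ (j+1) u) - gEta d η (T₂ (j+1) u)|
                + |gEta d η (T₁ j u) - gEta d η (T₂ j u)| := abs_four _ _ _ _
            _ ≤ (2 + 2*L) * c * u^n := by nlinarith
        have hGpt : ∀ u ∈ Set.Ioc (0:ℝ) s,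
            |(T₁ (j+2) u - T₁ (j+1) u) - (T₂ (j+2) u - T₂ (j+1) u)| ≤ 2 * c * u^n := by
          intro u hu
          have hut := hmemIcc u hu
          have ih2 := ih (j+2) u hut
          have ih1 := ih (j+1) u hut
          rw [hcu u] at ih2 ih1
          have hre : (T₁ (j+2) u - T₁ (j+1) u) - (T₂ (j+2) u - T₂ (j+1) u)
              = (T₁ (j+2) u - T₂ (j+2) u) - (T₁ (j+1) u - T₂ (j+1) u) := by ring
          rw [hre]
          calc _ ≤ |T₁ (j+2) u - T₂ (j+2) u| + |T₁ (j+1) u - T₂ (j+1) u| := abs_sub _ _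
            _ ≤ 2 * c * u^n := by nlinarith
        -- bound on the constant inner-integral difference
        have hIGd : |(∫ u in (0:ℝ)..s, (T₁ (j+2) u - T₁ (j+1) u))
              - ∫ u in (0:ℝ)..s, (T₂ (j+2) u - T₂ (j+1) u)|
            ≤ 2 * c * s^(n+1) / ((n:ℝ)+1) := by
          rw [← eG]
          have hb := intervalIntegral.norm_integral_le_abs_of_norm_le (μ := volume)
            (f := fun u => (T₁ (j+2) u - T₁ (j+1) u) - (T₂ (j+2) u - T₂ (j+1) u))
            (g := fun u => 2 * c * u^n) (a := 0) (b := s)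
            (by
              filter_upwards [ae_restrict_mem measurableSet_uIoc] with u hu
              rw [Set.uIoc_of_le hs.1] at hu
              exact hGpt u hu)
            ((continuous_const.mul (continuous_pow n)).intervalIntegrable 0 s)
          rw [Real.norm_eq_abs] at hb
          refine hb.trans ?_
          have hval : (∫ u in (0:ℝ)..s, 2 * c * u^n) = 2 * c * s^(n+1) / ((n:ℝ)+1) := by
            rw [intervalIntegral.integral_const_mul, integral_pow]
            push_cast; ring
          rw [hval, abs_of_nonneg (div_nonneg (mul_nonneg (by linarith) (pow_nonneg hs.1 _))
            (le_of_lt hn1pos))]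
        -- pointwise bound on the full integrand difference
        have hHpt : ∀ u ∈ Set.Ioc (0:ℝ) s,
            |((T₁ (j+1) u - T₁ j u - gEta d η (T₁ (j+1) u) + gEta d η (T₁ j u))
                + ∫ w in (0:ℝ)..s, (T₁ (j+2) w - T₁ (j+1) w))
              - ((T₂ (j+1) u - T₂ j u - gEta d η (T₂ (j+1) u) + gEta d η (T₂ j u))
                + ∫ w in (0:ℝ)..s, (T₂ (j+2) w - T₂ (j+1) w))|
            ≤ (2 + 2*L) * c * u^n + 2 * c * s^(n+1) / ((n:ℝ)+1) := by
          intro u hu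
          have h1 := hFpt u hu
          calc _ ≤ |(T₁ (j+1) u - T₁ j u - gEta d η (T₁ (j+1) u) + gEta d η (T₁ j u))
                - (T₂ (j+1) u - T₂ j u - gEta d η (T₂ (j+1) u) + gEta d η (T₂ j u))|
              + |(∫ w in (0:ℝ)..s, (T₁ (j+2) w - T₁ (j+1) w))
                - ∫ w in (0:ℝ)..s, (T₂ (j+2) w - T₂ (j+1) w)| := by
                refine le_trans (le_of_eq (congrArg _ (by ring))) (abs_add_le _ _)
            _ ≤ (2 + 2*L) * c * u^n + 2 * c * s^(n+1) / ((n:ℝ)+1) := add_le_add h1 hIGd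
        -- bound on the main integral
        have hIH : |∫ u in (0:ℝ)..s,
              (((T₁ (j+1) u - T₁ j u - gEta d η (T₁ (j+1) u) + gEta d η (T₁ j u))
                  + ∫ w in (0:ℝ)..s, (T₁ (j+2) w - T₁ (j+1) w))
                - ((T₂ (j+1) u - T₂ j u - gEta d η (T₂ (j+1) u) + gEta d η (T₂ j u))
                  + ∫ w in (0:ℝ)..s, (T₂ (j+2) w - T₂ (j+1) w)))|
            ≤ (2 + 2*L) * c * s^(n+1) / ((n:ℝ)+1)
              + (2 * c * s^(n+1) / ((n:ℝ)+1)) * s := by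
          have hgc' : Continuous (fun u : ℝ => (2 + 2*L) * c * u^n
              + 2 * c * s^(n+1) / ((n:ℝ)+1)) :=
            (continuous_const.mul (continuous_pow n)).add continuous_const
          have hb := intervalIntegral.norm_integral_le_abs_of_norm_le (μ := volume)
            (f := fun u => ((T₁ (j+1) u - T₁ j u - gEta d η (T₁ (j+1) u) + gEta d η (T₁ j u))
                  + ∫ w in (0:ℝ)..s, (T₁ (j+2) w - T₁ (j+1) w))
                - ((T₂ (j+1) u - T₂ j u - gEta d η (T₂ (j+1) u) + gEta d η (T₂ j u))
                  + ∫ w in (0:ℝ)..s, (T₂ (j+2) w - T₂ (j+1) w)))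
            (g := fun u => (2 + 2*L) * c * u^n + 2 * c * s^(n+1) / ((n:ℝ)+1))
            (a := 0) (b := s)
            (by
              filter_upwards [ae_restrict_mem measurableSet_uIoc] with u hu
              rw [Set.uIoc_of_le hs.1] at hu
              exact hHpt u hu)
            (hgc'.intervalIntegrable 0 s)
          rw [Real.norm_eq_abs] at hb
          refine hb.trans ?_
          have hval : (∫ u in (0:ℝ)..s, ((2 + 2*L) * c * u^n
                + 2 * c * s^(n+1) / ((n:ℝ)+1)))
              = (2 + 2*L) * c * s^(n+1) / ((n:ℝ)+1)
                + (2 * c * s^(n+1) / ((n:ℝ)+1)) * s := by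
            rw [intervalIntegral.integral_add (f := fun u : ℝ => (2 + 2*L) * c * u^n)
              ((continuous_const.mul (continuous_pow n)).intervalIntegrable 0 s)
              intervalIntegrable_const,
              intervalIntegral.integral_const_mul, integral_pow,
              intervalIntegral.integral_const, smul_eq_mul]
            push_cast
            field_simp
            ring
          have h2L : (0:ℝ) ≤ (2 + 2*L) * c := by nlinarith
          have hnn1 : (0:ℝ) ≤ (2 + 2*L) * c * s^(n+1) / ((n:ℝ)+1) :=
            div_nonneg (mul_nonneg h2L (pow_nonneg hs.1 _)) (le_of_lt hn1pos)
          have hnn2 : (0:ℝ) ≤ (2 * c * s^(n+1) / ((n:ℝ)+1)) * s :=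
            mul_nonneg (div_nonneg (mul_nonneg (by linarith) (pow_nonneg hs.1 _))
              (le_of_lt hn1pos)) hs.1
          rw [hval, abs_of_nonneg (by linarith)]
        -- combine
        have hld : (0:ℝ) ≤ lam * d := by positivity
        have hfne : ((n.factorial : ℝ)) ≠ 0 := by exact_mod_cast n.factorial_ne_zero
        have hcsn : (0:ℝ) ≤ c * s^(n+1) / ((n:ℝ)+1) :=
          div_nonneg (mul_nonneg hc0 (pow_nonneg hs.1 _)) (le_of_lt hn1pos)
        calc |T₁ (j+1) s - T₂ (j+1) s|
            ≤ lam * d * ((2 + 2*L) * c * s^(n+1) / ((n:ℝ)+1)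
                + (2 * c * s^(n+1) / ((n:ℝ)+1)) * s) := by
              rw [hdiff, abs_mul, abs_neg, abs_of_nonneg hld]
              exact mul_le_mul_of_nonneg_left hIH hld
          _ ≤ lam * d * ((2 + 2*L) * c * s^(n+1) / ((n:ℝ)+1)
                + (2 * c * s^(n+1) / ((n:ℝ)+1)) * t) := by
              have : (2 * c * s^(n+1) / ((n:ℝ)+1)) * s
                  ≤ (2 * c * s^(n+1) / ((n:ℝ)+1)) * t :=
                mul_le_mul_of_nonneg_left hs.2
                  (div_nonneg (mul_nonneg (by linarith) (pow_nonneg hs.1 _))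
                    (le_of_lt hn1pos))
              have h2 : lam * (d:ℝ) * ((2 + 2*L) * c * s^(n+1) / ((n:ℝ)+1)
                  + (2 * c * s^(n+1) / ((n:ℝ)+1)) * s)
                  ≤ lam * (d:ℝ) * ((2 + 2*L) * c * s^(n+1) / ((n:ℝ)+1)
                  + (2 * c * s^(n+1) / ((n:ℝ)+1)) * t) :=
                mul_le_mul_of_nonneg_left (by linarith) hld
              exact h2
          _ = B * K^(n+1) * s^(n+1) / (n+1).factorial := by
              rw [hcdef, hKdef, pow_succ, Nat.factorial_succ]
              push_cast
              field_simp
              ring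
  -- conclusion
  intro i s hs
  clear_value L B K
  have hlim : Tendsto (fun n : ℕ => B * K^n * s^n / n.factorial) atTop (nhds 0) := by
    have h := FloorSemiring.tendsto_pow_div_factorial_atTop (K := ℝ) (K*s)
    have heqf : (fun n : ℕ => B * K^n * s^n / n.factorial)
        = fun n : ℕ => B * ((K*s)^n / n.factorial) := by
      funext n; rw [mul_pow]; ring
    rw [heqf]
    simpa using h.const_mul B
  have habs : |T₁ i s - T₂ i s| ≤ 0 := ge_of_tendsto' hlim (fun n => key n i s hs)
  have := abs_nonpos_iff.mp habs
  linarith [sub_eq_zero.mp this, this]
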